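/- Let A be a proper (finite or infinite) subset of 𝕏 and let f ∈ Dom_+(Γ) be such that (i) there exists x₀ ∉ A with f(x₀) < inf_{x∈A} f(x), and (ii) there exists ε > 0 with Γf(x) ≤ −ε for all x ∉ A. Then for every x ∉ A with f(x) < inf_{y∈A} f(y) one has P_x(τ_A = ∞) > 0 and E_x(ζ | τ_A = ∞) < ∞. -/

import Mathlib

open MeasureTheory Set Filter
open scoped Classical ENNReal NNReal

/-- A continuous-time Markov chain on a countably infinite state space `X`,
described by its generator `Γ`, together with a probability space carrying,
for each starting point `x`, the embedded jump chain `jump` and the holding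
times `hold` (with `hold n` the holding time at the `n`-th visited state). -/
structure CTMC where
  X : Type
  countX : Countable X
  infX : Infinite X
  Γ : X → X → ℝ
  γ : X → ℝ
  γ_pos : ∀ x, 0 < γ x
  Γ_offdiag_nonneg : ∀ x y, y ≠ x → 0 ≤ Γ x y
  Γ_diag : ∀ x, Γ x x = - γ x
  γ_sum : ∀ x, HasSum (fun y => if y = x then 0 else Γ x y) (γ x)
  /-- irreducibility of the embedded jump chain -/
  irr : ∀ x y : X, ∃ (n : ℕ) (path : ℕ → X), path 0 = x ∧ path n = y ∧
    ∀ k, k < n → 0 < (if path (k+1) = path k then 0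
      else Γ (path k) (path (k+1)) / γ (path k))
  Ω : Type
  measΩ : MeasurableSpace Ω
  μ : X → @Measure Ω measΩ
  probμ : ∀ x, @IsProbabilityMeasure Ω measΩ (μ x)
  jump : ℕ → Ω → X
  hold : ℕ → Ω → ℝ
  jump_meas : ∀ (n : ℕ) (x : X), MeasurableSet[measΩ] {ω | jump n ω = x}
  hold_meas : ∀ n : ℕ, @Measurable Ω ℝ measΩ _ (hold n)
  hold_pos : ∀ n ω, 0 < hold n ω
  /-- under `μ x` the chain starts at `x` -/
  start : ∀ x : X, μ x {ω | jump 0 ω = x} = 1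
  /-- finite-dimensional law: the embedded chain is Markov with transition
  probabilities `P x y = Γ x y / γ x` (for `y ≠ x`), and conditionally on the
  embedded chain the holding times are independent exponentials of rates
  `γ (jump n)` -/
  law : ∀ (x : X) (n : ℕ) (path : ℕ → X) (t : ℕ → ℝ), path 0 = x → (∀ k, 0 ≤ t k) →
    μ x {ω | (∀ k, k ≤ n → jump k ω = path k) ∧ (∀ k, k < n → t k < hold k ω)}
      = ENNReal.ofReal (∏ k ∈ Finset.range n,
          ((if path (k+1) = path k then 0 else Γ (path k) (path (k+1)) / γ (path k))
            * Real.exp (-(γ (path k)) * t k)))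

namespace CTMC

attribute [instance] CTMC.countX CTMC.infX CTMC.measΩ CTMC.probμ

variable (M : CTMC)

/-- embedded chain transition probabilities -/
noncomputable def P (x y : M.X) : ℝ := if y = x then 0 else M.Γ x y / M.γ x

/-- jump times -/
noncomputable def J (n : ℕ) (ω : M.Ω) : ℝ := ∑ k ∈ Finset.range n, M.hold k ω

/-- explosion (life) time -/
noncomputable def zeta (ω : M.Ω) : ℝ≥0∞ := ⨆ n, ENNReal.ofReal (M.J n ω)

/-- the continuous-time chain: `pos t ω = some (jump n ω)` if `J n ≤ t < J (n+1)`,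
and `none` (the cemetery state `∂`) after the explosion time. -/
noncomputable def pos (t : ℝ) (ω : M.Ω) : Option M.X :=
  if h : ∃ n, M.J n ω ≤ t ∧ t < M.J (n+1) ω then some (M.jump h.choose ω) else none

/-- passage time: `τ_A = inf {t ≥ 0 : ξ_t ∈ A}` -/
noncomputable def tau (A : Set M.X) (ω : M.Ω) : ℝ≥0∞ :=
  sInf (ENNReal.ofReal '' {s : ℝ | 0 ≤ s ∧ ∃ a ∈ A, M.pos s ω = some a})

/-- `f` belongs to the domain of the generator -/
def InDom (f : M.X → ℝ) : Prop :=
  ∀ x : M.X, Summable (fun y => if y = x then 0 else M.Γ x y * f y)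

/-- `f ∈ Dom_+(Γ)` -/
def InDomPos (f : M.X → ℝ) : Prop := (∀ x, 0 ≤ f x) ∧ M.InDom f

/-- action of the generator : `Γ f (x) = ∑_y Γ_{xy} f(y)` -/
noncomputable def gen (f : M.X → ℝ) (x : M.X) : ℝ :=
  (∑' y, if y = x then 0 else M.Γ x y * f y) - M.γ x * f x

/-- recurrence of the embedded jump chain -/
def JumpRecurrent : Prop := ∀ x : M.X, M.μ x {ω | ∃ n, 1 ≤ n ∧ M.jump n ω = x} = 1

/-- `f → ∞` : all sublevel sets are finite -/
def FinSublevels (f : M.X → ℝ) : Prop := ∀ r : ℝ, {x : M.X | f x ≤ r}.Finite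

end CTMC
section Aux

open Real in
lemma lint_exp_aux (c : ℝ) (hc : 0 < c) :
    ∫⁻ t in Ioi (0:ℝ), ENNReal.ofReal (Real.exp (-(c * t))) = ENNReal.ofReal c⁻¹ := by
  rw [← ofReal_integral_eq_lintegral_ofReal]
  · congr 1
    have := integral_comp_mul_left_Ioi (fun u => Real.exp (-u)) 0 hc
    simp only [mul_zero] at this
    rw [this, integral_exp_neg_Ioi_zero, smul_eq_mul, mul_one]
  · simpa only [neg_mul, IntegrableOn] using exp_neg_integrableOn_Ioi 0 hc
  · filter_upwards with t using (Real.exp_pos _).le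

end Aux

namespace CTMC

variable (M : CTMC)

lemma P_nonneg (x y : M.X) : 0 ≤ M.P x y := by
  unfold P
  split
  · exact le_rfl
  · exact div_nonneg (M.Γ_offdiag_nonneg x y (by assumption)) (M.γ_pos x).le

lemma P_hasSum (x : M.X) : HasSum (fun y => M.P x y) 1 := by
  have h := (M.γ_sum x).div_const (M.γ x)
  have he : (fun y => (if y = x then 0 else M.Γ x y) / M.γ x) = fun y => M.P x y := by
    funext y
    unfold P
    split <;> simp
  rw [he] at h
  rwa [div_self (M.γ_pos x).ne'] at h

lemma summable_P_mul (x : M.X) {f : M.X → ℝ} (hf : M.InDom f) :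
    Summable (fun y => M.P x y * f y) := by
  have h := ((hf x).div_const (M.γ x))
  have he : (fun y => (if y = x then 0 else M.Γ x y * f y) / M.γ x)
      = fun y => M.P x y * f y := by
    funext y
    unfold P
    split
    · simp
    · ring
  rwa [he] at h

lemma tsum_ofReal_P (x : M.X) : ∑' y, ENNReal.ofReal (M.P x y) = 1 := by
  rw [← ENNReal.ofReal_tsum_of_nonneg (fun y => M.P_nonneg x y) (M.P_hasSum x).summable,
    (M.P_hasSum x).tsum_eq, ENNReal.ofReal_one]

lemma J_succ (n : ℕ) (ω : M.Ω) : M.J (n+1) ω = M.J n ω + M.hold n ω :=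
  Finset.sum_range_succ _ n

lemma J_lt_succ (n : ℕ) (ω : M.Ω) : M.J n ω < M.J (n+1) ω := by
  rw [M.J_succ]
  linarith [M.hold_pos n ω]

lemma J_strictMono (ω : M.Ω) : StrictMono (fun n => M.J n ω) :=
  strictMono_nat_of_lt_succ (fun n => M.J_lt_succ n ω)

lemma J_nonneg (n : ℕ) (ω : M.Ω) : 0 ≤ M.J n ω :=
  Finset.sum_nonneg (fun k _ => (M.hold_pos k ω).le)

lemma J_interval_unique {m n : ℕ} {s : ℝ} {ω : M.Ω}
    (hm : M.J m ω ≤ s ∧ s < M.J (m+1) ω) (hn : M.J n ω ≤ s ∧ s < M.J (n+1) ω) :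
    m = n := by
  by_contra hne
  rcases Nat.lt_or_ge m n with h | h
  · have : M.J (m+1) ω ≤ M.J n ω := (M.J_strictMono ω).monotone (Nat.succ_le_of_lt h)
    linarith [hm.2, hn.1]
  · have h' : n < m := lt_of_le_of_ne h (Ne.symm hne)
    have : M.J (n+1) ω ≤ M.J m ω := (M.J_strictMono ω).monotone (Nat.succ_le_of_lt h')
    linarith [hn.2, hm.1]

lemma pos_eq {n : ℕ} {s : ℝ} {ω : M.Ω} (h1 : M.J n ω ≤ s) (h2 : s < M.J (n+1) ω) :
    M.pos s ω = some (M.jump n ω) := by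
  have hex : ∃ m, M.J m ω ≤ s ∧ s < M.J (m+1) ω := ⟨n, h1, h2⟩
  rw [pos, dif_pos hex]
  have : hex.choose = n := M.J_interval_unique hex.choose_spec ⟨h1, h2⟩
  rw [this]

lemma tau_top_iff (A : Set M.X) (ω : M.Ω) :
    M.tau A ω = ⊤ ↔ ∀ n, M.jump n ω ∉ A := by
  constructor
  · intro h n hn
    have hmem : ENNReal.ofReal (M.J n ω) ∈
        ENNReal.ofReal '' {s : ℝ | 0 ≤ s ∧ ∃ a ∈ A, M.pos s ω = some a} :=
      ⟨M.J n ω, ⟨M.J_nonneg n ω, M.jump n ω, hn, M.pos_eq le_rfl (M.J_lt_succ n ω)⟩, rfl⟩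
    have hle : M.tau A ω ≤ ENNReal.ofReal (M.J n ω) := sInf_le hmem
    rw [h] at hle
    exact absurd (top_le_iff.mp hle) ENNReal.ofReal_ne_top
  · intro h
    have hempty : {s : ℝ | 0 ≤ s ∧ ∃ a ∈ A, M.pos s ω = some a} = ∅ := by
      ext s
      simp only [mem_setOf_eq, mem_empty_iff_false, iff_false, not_and]
      rintro hs ⟨a, ha, hpos⟩
      rw [pos] at hpos
      split_ifs at hpos with hh
      · have : a = M.jump hh.choose ω := (Option.some_inj.mp hpos).symm
        exact h _ (this ▸ ha)
    rw [tau, hempty, Set.image_empty, sInf_empty]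

/-- cylinder event -/
def cyl (n : ℕ) (p : ℕ → M.X) : Set M.Ω := {ω | ∀ k, k ≤ n → M.jump k ω = p k}

lemma meas_cylSet (n : ℕ) (p : ℕ → M.X) : MeasurableSet (M.cyl n p) := by
  have : M.cyl n p = ⋂ (k : ℕ) (_ : k ≤ n), {ω | M.jump k ω = p k} := by
    ext ω; simp [cyl]
  rw [this]
  exact MeasurableSet.iInter fun k => MeasurableSet.iInter fun _ => M.jump_meas k (p k)

lemma meas_jump_mem (n : ℕ) (B : Set M.X) : MeasurableSet {ω | M.jump n ω ∈ B} := by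
  have : {ω | M.jump n ω ∈ B} = ⋃ y : B, {ω | M.jump n ω = (y : M.X)} := by
    ext ω; simp
  rw [this]
  exact MeasurableSet.iUnion fun y => M.jump_meas n y

lemma meas_cyl {n : ℕ} {p : ℕ → M.X} {x : M.X} (hp : p 0 = x) :
    M.μ x (M.cyl n p)
      = ENNReal.ofReal (∏ k ∈ Finset.range n, M.P (p k) (p (k+1))) := by
  have h := M.law x n p (fun _ => 0) hp (fun _ => le_rfl)
  have hev : {ω | (∀ k, k ≤ n → M.jump k ω = p k) ∧ (∀ k, k < n → (0:ℝ) < M.hold k ω)}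
      = M.cyl n p := by
    ext ω
    exact and_iff_left (fun k _ => M.hold_pos k ω)
  rw [hev] at h
  rw [h]
  congr 1
  refine Finset.prod_congr rfl fun k _ => ?_
  rw [mul_zero, Real.exp_zero, mul_one]
  rfl

lemma lint_hold_cyl {n k : ℕ} {p : ℕ → M.X} {x : M.X} (hp : p 0 = x) (hk : k < n) :
    ∫⁻ ω in M.cyl n p, ENNReal.ofReal (M.hold k ω) ∂ M.μ x
      = ENNReal.ofReal (M.γ (p k))⁻¹ * M.μ x (M.cyl n p) := by
  have hmeas : ∀ t : ℝ, MeasurableSet {ω | t < M.hold k ω} :=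
    fun t => measurableSet_lt measurable_const (M.hold_meas k)
  rw [lintegral_eq_lintegral_meas_lt _
    (Filter.Eventually.of_forall fun ω => (M.hold_pos k ω).le) (M.hold_meas k).aemeasurable]
  have hrs : ∀ t : ℝ, 0 ≤ t →
      (M.μ x).restrict (M.cyl n p) {ω | t < M.hold k ω}
        = M.μ x (M.cyl n p) * ENNReal.ofReal (Real.exp (-(M.γ (p k) * t))) := by
    intro t ht
    rw [Measure.restrict_apply (hmeas t)]
    have h := M.law x n p (fun j => if j = k then t else 0) hp
      (fun j => by split <;> simp [ht])
    have hev : {ω | (∀ j, j ≤ n → M.jump j ω = p j)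
          ∧ (∀ j, j < n → (if j = k then t else 0) < M.hold j ω)}
        = {ω | t < M.hold k ω} ∩ M.cyl n p := by
      ext ω
      constructor
      · rintro ⟨h1, h2⟩
        exact ⟨by simpa using h2 k hk, h1⟩
      · rintro ⟨h1, h2⟩
        refine ⟨h2, fun j hj => ?_⟩
        split
        · next hjk => exact hjk ▸ h1
        · exact M.hold_pos j ω
    rw [hev] at h
    rw [h, M.meas_cyl hp]
    have hprod : (∏ j ∈ Finset.range n,
        ((if p (j+1) = p j then 0 else M.Γ (p j) (p (j+1)) / M.γ (p j))
          * Real.exp (-(M.γ (p j)) * (if j = k then t else 0))))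
        = (∏ j ∈ Finset.range n, M.P (p j) (p (j+1))) * Real.exp (-(M.γ (p k) * t)) := by
      rw [Finset.prod_mul_distrib]
      have hexp : (∏ j ∈ Finset.range n, Real.exp (-(M.γ (p j)) * (if j = k then t else 0)))
          = Real.exp (-(M.γ (p k) * t)) := by
        have : ∀ j ∈ Finset.range n,
            Real.exp (-(M.γ (p j)) * (if j = k then t else 0))
              = (if j = k then Real.exp (-(M.γ (p k) * t)) else 1) := by
          intro j _
          split
          · next hjk => rw [hjk, neg_mul]
          · rw [mul_zero, Real.exp_zero]
        rw [Finset.prod_congr rfl this, Finset.prod_ite_eq' (Finset.range n) k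
          (fun _ => Real.exp (-(M.γ (p k) * t))), if_pos (Finset.mem_range.mpr hk)]
      rw [hexp]
      rfl
    rw [hprod, ENNReal.ofReal_mul (Finset.prod_nonneg fun j _ => M.P_nonneg _ _)]
  calc ∫⁻ t in Ioi 0, (M.μ x).restrict (M.cyl n p) {ω | t < M.hold k ω}
      = ∫⁻ t in Ioi 0, M.μ x (M.cyl n p) * ENNReal.ofReal (Real.exp (-(M.γ (p k) * t))) := by
        refine setLIntegral_congr_fun measurableSet_Ioi
          (fun t ht => hrs t (le_of_lt ht))
    _ = M.μ x (M.cyl n p) * ∫⁻ t in Ioi 0, ENNReal.ofReal (Real.exp (-(M.γ (p k) * t))) := by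
        rw [lintegral_const_mul]
        exact ENNReal.measurable_ofReal.comp
          ((Real.continuous_exp.measurable).comp (measurable_const.mul measurable_id).neg)
    _ = ENNReal.ofReal (M.γ (p k))⁻¹ * M.μ x (M.cyl n p) := by
        rw [lint_exp_aux _ (M.γ_pos (p k)), mul_comm]

/-- path of length `n` started at `x` determined by its steps `v` -/
def pathOf {n : ℕ} (x : M.X) (v : Fin n → M.X) : ℕ → M.X :=
  fun k => if h : k = 0 then x else if h2 : k - 1 < n then v ⟨k - 1, h2⟩ else x

lemma pathOf_zero {n : ℕ} (x : M.X) (v : Fin n → M.X) : M.pathOf x v 0 = x := rfl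

lemma pathOf_succ {n : ℕ} (x : M.X) (v : Fin n → M.X) {k : ℕ} (h : k < n) :
    M.pathOf x v (k+1) = v ⟨k, h⟩ := by
  simp [pathOf, h]

lemma pathOf_cons {n : ℕ} (x y : M.X) (v : Fin n → M.X) {k : ℕ} (hk : k ≤ n) :
    M.pathOf x (Fin.cons y v) (k+1) = M.pathOf y v k := by
  cases k with
  | zero =>
    rw [M.pathOf_succ x (Fin.cons y v) (Nat.succ_pos n), M.pathOf_zero]
    exact Fin.cons_zero (α := fun _ => M.X) y v
  | succ j =>
    have hj : j < n := Nat.lt_of_succ_le hk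
    have hj1 : j + 1 < n + 1 := Nat.succ_lt_succ hj
    rw [M.pathOf_succ x (Fin.cons y v) hj1, M.pathOf_succ y v hj]
    exact Fin.cons_succ (α := fun _ => M.X) y v ⟨j, hj⟩

/-- weight of a path -/
noncomputable def wt {n : ℕ} (x : M.X) (v : Fin n → M.X) : ℝ≥0∞ :=
  ENNReal.ofReal (∏ k ∈ Finset.range n, M.P (M.pathOf x v k) (M.pathOf x v (k+1)))

lemma wt_eq_prod {n : ℕ} (x : M.X) (v : Fin n → M.X) :
    M.wt x v = ∏ k ∈ Finset.range n,
      ENNReal.ofReal (M.P (M.pathOf x v k) (M.pathOf x v (k+1))) :=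
  ENNReal.ofReal_prod_of_nonneg (fun k _ => M.P_nonneg _ _)

lemma wt_zero (x : M.X) (v : Fin 0 → M.X) : M.wt x v = 1 := by
  simp [wt]

lemma wt_cons {n : ℕ} (x y : M.X) (v : Fin n → M.X) :
    M.wt x (Fin.cons y v) = ENNReal.ofReal (M.P x y) * M.wt y v := by
  rw [wt_eq_prod, wt_eq_prod, Finset.prod_range_succ']
  have h0 : M.pathOf x (Fin.cons y v) 0 = x := rfl
  have h1 : M.pathOf x (Fin.cons y v) (0+1) = y := by
    rw [M.pathOf_cons x y v (Nat.zero_le n), M.pathOf_zero]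
  rw [h0, h1, mul_comm]
  congr 1
  refine Finset.prod_congr rfl fun k hk => ?_
  have hk' : k < n := Finset.mem_range.mp hk
  rw [M.pathOf_cons x y v (le_of_lt hk'), M.pathOf_cons x y v (Nat.succ_le_of_lt hk')]

lemma meas_cyl_wt {n : ℕ} (x : M.X) (v : Fin n → M.X) :
    M.μ x (M.cyl n (M.pathOf x v)) = M.wt x v :=
  M.meas_cyl (M.pathOf_zero x v)

lemma tsum_cons {n : ℕ} (F : (Fin (n+1) → M.X) → ℝ≥0∞) :
    ∑' w, F w = ∑' (y : M.X), ∑' (v : Fin n → M.X), F (Fin.cons y v) := by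
  rw [← ENNReal.tsum_prod (f := fun y v => F (Fin.cons y v))]
  exact ((Fin.consEquiv (fun _ => M.X)).tsum_eq F).symm

/-- probability that the embedded chain stays off `A` during its first `n` steps -/
noncomputable def mlive (A : Set M.X) : ℕ → M.X → ℝ≥0∞
  | 0, _ => 1
  | n+1, x => ∑' y, if y ∈ A then 0 else ENNReal.ofReal (M.P x y) * mlive A n y

/-- probability that the embedded chain enters `A` within its first `n` steps -/
noncomputable def hkill (A : Set M.X) : ℕ → M.X → ℝ≥0∞
  | 0, _ => 0
  | n+1, x => ∑' y, if y ∈ A then ENNReal.ofReal (M.P x y)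
      else ENNReal.ofReal (M.P x y) * hkill A n y

/-- expected sojourn-time sum accumulated while staying off `A` -/
noncomputable def ut (A : Set M.X) : ℕ → M.X → ℝ≥0∞
  | 0, _ => 0
  | n+1, x => ∑' y, if y ∈ A then 0
      else ENNReal.ofReal (M.P x y) *
        (ut A n y + ENNReal.ofReal (M.γ x)⁻¹ * M.mlive A n y)

/-- Lyapunov-function supermartingale quantity -/
noncomputable def ll (A : Set M.X) (f : M.X → ℝ) (ε : ℝ) : ℕ → M.X → ℝ≥0∞
  | 0, x => ENNReal.ofReal (f x)
  | n+1, x => ∑' y, if y ∈ A then 0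
      else ENNReal.ofReal (M.P x y) *
        (ll A f ε n y + ENNReal.ofReal (ε / M.γ x) * M.mlive A n y)

lemma mlive_add_hkill (A : Set M.X) : ∀ n, ∀ x : M.X, M.mlive A n x + M.hkill A n x = 1 := by
  intro n
  induction n with
  | zero => intro x; simp [mlive, hkill]
  | succ n ih =>
    intro x
    rw [mlive, hkill, ← ENNReal.tsum_add]
    calc (∑' y, ((if y ∈ A then 0 else ENNReal.ofReal (M.P x y) * M.mlive A n y)
            + (if y ∈ A then ENNReal.ofReal (M.P x y)
              else ENNReal.ofReal (M.P x y) * M.hkill A n y)))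
        = ∑' y, ENNReal.ofReal (M.P x y) := by
          refine tsum_congr fun y => ?_
          by_cases hy : y ∈ A
          · simp [hy]
          · simp only [if_neg hy]
            rw [← mul_add, ih y, mul_one]
      _ = 1 := M.tsum_ofReal_P x

lemma mlive_le_one (A : Set M.X) (n : ℕ) (x : M.X) : M.mlive A n x ≤ 1 := by
  conv_rhs => rw [← M.mlive_add_hkill A n x]
  exact le_self_add

lemma eps_mul_ut_le_ll (A : Set M.X) (f : M.X → ℝ) {ε : ℝ} (hε : 0 ≤ ε)
    (hf : ∀ y, 0 ≤ f y) :
    ∀ n, ∀ x : M.X, ENNReal.ofReal ε * M.ut A n x ≤ M.ll A f ε n x := by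
  intro n
  induction n with
  | zero => intro x; simp [ut, ll]
  | succ n ih =>
    intro x
    rw [ut, ll, ← ENNReal.tsum_mul_left]
    refine ENNReal.tsum_le_tsum fun y => ?_
    by_cases hy : y ∈ A
    · simp [hy]
    · simp only [if_neg hy]
      rw [← mul_assoc, mul_comm (ENNReal.ofReal ε) (ENNReal.ofReal (M.P x y)), mul_assoc]
      refine mul_le_mul_right ?_ _
      rw [mul_add]
      refine add_le_add (ih y) ?_
      rw [← mul_assoc, ← ENNReal.ofReal_mul hε, ← div_eq_mul_inv]

lemma onestep {f : M.X → ℝ} (hfpos : ∀ y, 0 ≤ f y) (hdom : M.InDom f)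
    {ε : ℝ} (hε : 0 < ε) {x : M.X} (hd : M.gen f x ≤ -ε) :
    (∑' y, ENNReal.ofReal (M.P x y) * ENNReal.ofReal (f y))
      + ENNReal.ofReal (ε / M.γ x) ≤ ENNReal.ofReal (f x) := by
  have hγ := M.γ_pos x
  have hsum : Summable (fun y => M.P x y * f y) := M.summable_P_mul x hdom
  have hreal : (∑' y, M.P x y * f y) + ε / M.γ x ≤ f x := by
    have hgen : (∑' y, if y = x then 0 else M.Γ x y * f y) - M.γ x * f x ≤ -ε := hd
    have hPf : (∑' y, M.P x y * f y) = (∑' y, if y = x then 0 else M.Γ x y * f y) / M.γ x := by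
      rw [← tsum_div_const]
      refine tsum_congr fun y => ?_
      unfold P
      split
      · simp
      · ring
    rw [hPf]
    rw [← add_div, div_le_iff₀ hγ]
    nlinarith [hgen]
  have hnn : 0 ≤ ∑' y, M.P x y * f y :=
    tsum_nonneg fun y => mul_nonneg (M.P_nonneg x y) (hfpos y)
  calc (∑' y, ENNReal.ofReal (M.P x y) * ENNReal.ofReal (f y)) + ENNReal.ofReal (ε / M.γ x)
      = ENNReal.ofReal ((∑' y, M.P x y * f y) + ε / M.γ x) := by
        rw [ENNReal.ofReal_add hnn (by positivity)]
        congr 1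
        rw [ENNReal.ofReal_tsum_of_nonneg
          (fun y => mul_nonneg (M.P_nonneg x y) (hfpos y)) hsum]
        exact tsum_congr fun y => (ENNReal.ofReal_mul (M.P_nonneg x y)).symm
    _ ≤ ENNReal.ofReal (f x) := ENNReal.ofReal_le_ofReal hreal

lemma key_ineq (A : Set M.X) (hA : A.Nonempty) {f : M.X → ℝ} (hf : M.InDomPos f)
    {ε : ℝ} (hε : 0 < ε) (hdrift : ∀ x, x ∉ A → M.gen f x ≤ -ε) :
    ∀ n, ∀ x, x ∉ A →
      M.ll A f ε n x + ENNReal.ofReal (sInf (f '' A)) * M.hkill A n x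
        ≤ ENNReal.ofReal (f x) := by
  have hBle : ∀ a ∈ A, ENNReal.ofReal (sInf (f '' A)) ≤ ENNReal.ofReal (f a) := by
    intro a ha
    refine ENNReal.ofReal_le_ofReal ?_
    exact csInf_le ⟨0, fun r ⟨z, _, hz⟩ => hz ▸ hf.1 z⟩ (mem_image_of_mem f ha)
  intro n
  induction n with
  | zero => intro x _; simp [ll, hkill]
  | succ n ih =>
    intro x hx
    rw [ll, hkill, ← ENNReal.tsum_mul_left, ← ENNReal.tsum_add]
    have step1 : (∑' y, ((if y ∈ A then 0
          else ENNReal.ofReal (M.P x y) *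
            (M.ll A f ε n y + ENNReal.ofReal (ε / M.γ x) * M.mlive A n y))
        + ENNReal.ofReal (sInf (f '' A)) * (if y ∈ A then ENNReal.ofReal (M.P x y)
          else ENNReal.ofReal (M.P x y) * M.hkill A n y)))
        ≤ ∑' y, (ENNReal.ofReal (M.P x y) * ENNReal.ofReal (f y)
            + ENNReal.ofReal (ε / M.γ x) *
              (if y ∈ A then 0 else ENNReal.ofReal (M.P x y) * M.mlive A n y)) := by
      refine ENNReal.tsum_le_tsum fun y => ?_
      by_cases hy : y ∈ A
      · simp only [if_pos hy, zero_add]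
        rw [mul_comm (ENNReal.ofReal (sInf (f '' A)))]
        rw [mul_zero, add_zero]
        exact mul_le_mul_right (hBle y hy) _
      · simp only [if_neg hy]
        have : ENNReal.ofReal (M.P x y) *
              (M.ll A f ε n y + ENNReal.ofReal (ε / M.γ x) * M.mlive A n y)
            + ENNReal.ofReal (sInf (f '' A)) * (ENNReal.ofReal (M.P x y) * M.hkill A n y)
            = ENNReal.ofReal (M.P x y) *
              (M.ll A f ε n y + ENNReal.ofReal (sInf (f '' A)) * M.hkill A n y)
            + ENNReal.ofReal (ε / M.γ x) * (ENNReal.ofReal (M.P x y) * M.mlive A n y) := by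
          ring
        rw [this]
        exact add_le_add (mul_le_mul_right (ih y hy) _) le_rfl
    refine le_trans step1 ?_
    rw [ENNReal.tsum_add, ENNReal.tsum_mul_left]
    have step2 : (∑' y, (if y ∈ A then 0
          else ENNReal.ofReal (M.P x y) * M.mlive A n y)) ≤ 1 := by
      rw [← M.tsum_ofReal_P x]
      refine ENNReal.tsum_le_tsum fun y => ?_
      by_cases hy : y ∈ A
      · simp [hy]
      · simp only [if_neg hy]
        calc ENNReal.ofReal (M.P x y) * M.mlive A n y
            ≤ ENNReal.ofReal (M.P x y) * 1 := mul_le_mul_right (M.mlive_le_one A n y) _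
          _ = ENNReal.ofReal (M.P x y) := mul_one _
    calc (∑' y, ENNReal.ofReal (M.P x y) * ENNReal.ofReal (f y))
          + ENNReal.ofReal (ε / M.γ x) *
            (∑' y, if y ∈ A then 0 else ENNReal.ofReal (M.P x y) * M.mlive A n y)
        ≤ (∑' y, ENNReal.ofReal (M.P x y) * ENNReal.ofReal (f y))
            + ENNReal.ofReal (ε / M.γ x) * 1 :=
          add_le_add le_rfl (mul_le_mul_right step2 _)
      _ = (∑' y, ENNReal.ofReal (M.P x y) * ENNReal.ofReal (f y))
            + ENNReal.ofReal (ε / M.γ x) := by rw [mul_one]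
      _ ≤ ENNReal.ofReal (f x) := M.onestep hf.1 hf.2 hε (hdrift x hx)

lemma cons_live_iff (A : Set M.X) {n : ℕ} (y : M.X) (v : Fin n → M.X) :
    (∀ k : Fin (n+1), (Fin.cons (α := fun _ => M.X) y v) k ∉ A)
      ↔ (y ∉ A ∧ ∀ k : Fin n, v k ∉ A) := by
  rw [Fin.forall_fin_succ]
  constructor
  · rintro ⟨h0, hs⟩
    exact ⟨by simpa using h0, fun k => by simpa using hs k⟩
  · rintro ⟨h0, hs⟩
    exact ⟨by simpa using h0, fun k => by simpa using hs k⟩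

lemma mlive_eq_tsum (A : Set M.X) :
    ∀ n, ∀ x : M.X, M.mlive A n x
      = ∑' v : Fin n → M.X, if (∀ k, v k ∉ A) then M.wt x v else 0 := by
  intro n
  induction n with
  | zero =>
    intro x
    rw [tsum_eq_single (Fin.elim0 : Fin 0 → M.X) (fun b hb => absurd (Subsingleton.elim b _) hb)]
    rw [if_pos (fun k => k.elim0), M.wt_zero]
    rfl
  | succ n ih =>
    intro x
    rw [M.tsum_cons (fun w => if (∀ k, w k ∉ A) then M.wt x w else 0)]
    rw [show M.mlive A (n+1) x = ∑' y, if y ∈ A then 0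
        else ENNReal.ofReal (M.P x y) * M.mlive A n y from rfl]
    refine tsum_congr fun y => ?_
    by_cases hy : y ∈ A
    · rw [if_pos hy]
      refine (ENNReal.summable.tsum_eq_zero_iff.mpr fun v => ?_).symm
      rw [if_neg]
      intro hlive
      exact ((M.cons_live_iff A y v).mp hlive).1 hy
    · rw [if_neg hy, ih y, ← ENNReal.tsum_mul_left]
      refine tsum_congr fun v => ?_
      by_cases hv : ∀ k : Fin n, v k ∉ A
      · rw [if_pos hv, if_pos ((M.cons_live_iff A y v).mpr ⟨hy, hv⟩), M.wt_cons]
      · rw [if_neg hv, if_neg (fun hlive => hv ((M.cons_live_iff A y v).mp hlive).2), mul_zero]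

lemma ut_eq_tsum (A : Set M.X) :
    ∀ n, ∀ x : M.X, M.ut A n x
      = ∑' v : Fin n → M.X, if (∀ k, v k ∉ A) then
          M.wt x v * (∑ k ∈ Finset.range n, ENNReal.ofReal (M.γ (M.pathOf x v k))⁻¹)
        else 0 := by
  intro n
  induction n with
  | zero =>
    intro x
    simp [ut]
  | succ n ih =>
    intro x
    rw [M.tsum_cons (fun w => if (∀ k, w k ∉ A) then
      M.wt x w * (∑ k ∈ Finset.range (n+1), ENNReal.ofReal (M.γ (M.pathOf x w k))⁻¹) else 0)]
    rw [show M.ut A (n+1) x = ∑' y, if y ∈ A then 0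
        else ENNReal.ofReal (M.P x y) *
          (M.ut A n y + ENNReal.ofReal (M.γ x)⁻¹ * M.mlive A n y) from rfl]
    refine tsum_congr fun y => ?_
    by_cases hy : y ∈ A
    · rw [if_pos hy]
      refine (ENNReal.summable.tsum_eq_zero_iff.mpr fun v => ?_).symm
      rw [if_neg]
      intro hlive
      exact ((M.cons_live_iff A y v).mp hlive).1 hy
    · rw [if_neg hy, ih y, M.mlive_eq_tsum A n y,
        ← ENNReal.tsum_mul_left (a := ENNReal.ofReal (M.γ x)⁻¹),
        ← ENNReal.tsum_add, ← ENNReal.tsum_mul_left]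
      refine tsum_congr fun v => ?_
      by_cases hv : ∀ k : Fin n, v k ∉ A
      · rw [if_pos hv, if_pos hv, if_pos ((M.cons_live_iff A y v).mpr ⟨hy, hv⟩), M.wt_cons]
        have hcost : (∑ k ∈ Finset.range (n+1),
              ENNReal.ofReal (M.γ (M.pathOf x (Fin.cons y v) k))⁻¹)
            = (∑ k ∈ Finset.range n, ENNReal.ofReal (M.γ (M.pathOf y v k))⁻¹)
              + ENNReal.ofReal (M.γ x)⁻¹ := by
          rw [Finset.sum_range_succ']
          congr 1
          refine Finset.sum_congr rfl fun k hk => ?_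
          rw [M.pathOf_cons x y v (le_of_lt (Finset.mem_range.mp hk))]
        rw [hcost]
        ring
      · rw [if_neg hv, if_neg hv, if_neg (fun hlive => hv ((M.cons_live_iff A y v).mp hlive).2),
          mul_zero, add_zero, mul_zero]

/-- the event that the chain starts at `x` and avoids `A` during its first `n` jumps -/
def evn (A : Set M.X) (n : ℕ) (x : M.X) : Set M.Ω :=
  {ω | M.jump 0 ω = x ∧ ∀ k, k < n → M.jump (k+1) ω ∉ A}

lemma meas_evnSet (A : Set M.X) (n : ℕ) (x : M.X) : MeasurableSet (M.evn A n x) := by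
  have : M.evn A n x = {ω | M.jump 0 ω = x}
      ∩ ⋂ (k : ℕ) (_ : k < n), {ω | M.jump (k+1) ω ∈ A}ᶜ := by
    ext ω; simp [evn]
  rw [this]
  exact (M.jump_meas 0 x).inter (MeasurableSet.iInter fun k =>
    MeasurableSet.iInter fun _ => (M.meas_jump_mem (k+1) A).compl)

lemma evn_antitone (A : Set M.X) {n m : ℕ} (h : n ≤ m) (x : M.X) :
    M.evn A m x ⊆ M.evn A n x :=
  fun ω ⟨h0, hk⟩ => ⟨h0, fun k hkn => hk k (lt_of_lt_of_le hkn h)⟩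

lemma evn_eq_iUnion (A : Set M.X) (n : ℕ) (x : M.X) :
    M.evn A n x = ⋃ (v : {v : Fin n → M.X // ∀ k, v k ∉ A}), M.cyl n (M.pathOf x v.1) := by
  ext ω
  constructor
  · rintro ⟨h0, hk⟩
    refine mem_iUnion.mpr ⟨⟨fun k => M.jump (k.1+1) ω, fun k => hk k.1 k.2⟩, fun j hj => ?_⟩
    cases j with
    | zero => rw [M.pathOf_zero]; exact h0
    | succ i =>
      have hi : i < n := Nat.lt_of_succ_le hj
      rw [M.pathOf_succ x _ hi]
  · intro hω
    obtain ⟨v, hv⟩ := mem_iUnion.mp hω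
    refine ⟨by rw [hv 0 (Nat.zero_le n), M.pathOf_zero], fun k hk => ?_⟩
    rw [hv (k+1) (Nat.succ_le_of_lt hk), M.pathOf_succ x _ hk]
    exact v.2 ⟨k, hk⟩

lemma cyl_disjoint {n : ℕ} (x : M.X) {v v' : Fin n → M.X} (h : v ≠ v') :
    Disjoint (M.cyl n (M.pathOf x v)) (M.cyl n (M.pathOf x v')) := by
  rw [Set.disjoint_left]
  intro ω h1 h2
  obtain ⟨k, hk⟩ := Function.ne_iff.mp h
  apply hk
  have e1 := h1 (k.1+1) (Nat.succ_le_of_lt k.2)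
  have e2 := h2 (k.1+1) (Nat.succ_le_of_lt k.2)
  rw [M.pathOf_succ x v k.2] at e1
  rw [M.pathOf_succ x v' k.2] at e2
  rw [Fin.eta] at e1 e2
  rw [← e1, ← e2]

lemma cyl_pairwise_disjoint {n : ℕ} (A : Set M.X) (x : M.X) :
    Pairwise (Function.onFun Disjoint fun (v : {v : Fin n → M.X // ∀ k, v k ∉ A}) =>
      M.cyl n (M.pathOf x v.1)) :=
  fun v v' hvv' => M.cyl_disjoint x (fun he => hvv' (Subtype.ext he))

lemma meas_evn (A : Set M.X) (n : ℕ) (x : M.X) :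
    M.μ x (M.evn A n x) = M.mlive A n x := by
  rw [M.evn_eq_iUnion A n x,
    measure_iUnion (M.cyl_pairwise_disjoint A x) (fun v => M.meas_cylSet n _)]
  rw [M.mlive_eq_tsum A n x]
  calc (∑' (v : {v : Fin n → M.X // ∀ k, v k ∉ A}), M.μ x (M.cyl n (M.pathOf x v.1)))
      = ∑' (v : {v : Fin n → M.X // ∀ k, v k ∉ A}), M.wt x v.1 :=
        tsum_congr fun v => M.meas_cyl_wt x v.1
    _ = ∑' (v : Fin n → M.X), Set.indicator {v | ∀ k, v k ∉ A} (M.wt x) v :=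
        tsum_subtype {v : Fin n → M.X | ∀ k, v k ∉ A} (M.wt x)
    _ = ∑' (v : Fin n → M.X), if (∀ k, v k ∉ A) then M.wt x v else 0 :=
        tsum_congr fun v => by rw [Set.indicator_apply]; rfl

lemma lint_J_evn (A : Set M.X) (n : ℕ) (x : M.X) :
    ∫⁻ ω in M.evn A n x, ENNReal.ofReal (M.J n ω) ∂ M.μ x = M.ut A n x := by
  rw [M.evn_eq_iUnion A n x,
    lintegral_iUnion (fun v => M.meas_cylSet n _) (M.cyl_pairwise_disjoint A x)]
  have hcyl : ∀ v : {v : Fin n → M.X // ∀ k, v k ∉ A},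
      ∫⁻ ω in M.cyl n (M.pathOf x v.1), ENNReal.ofReal (M.J n ω) ∂ M.μ x
        = M.wt x v.1 * (∑ k ∈ Finset.range n, ENNReal.ofReal (M.γ (M.pathOf x v.1 k))⁻¹) := by
    intro v
    have hJ : ∀ ω, ENNReal.ofReal (M.J n ω)
        = ∑ k ∈ Finset.range n, ENNReal.ofReal (M.hold k ω) := fun ω =>
      ENNReal.ofReal_sum_of_nonneg (fun k _ => (M.hold_pos k ω).le)
    calc ∫⁻ ω in M.cyl n (M.pathOf x v.1), ENNReal.ofReal (M.J n ω) ∂ M.μ x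
        = ∫⁻ ω in M.cyl n (M.pathOf x v.1),
            (∑ k ∈ Finset.range n, ENNReal.ofReal (M.hold k ω)) ∂ M.μ x :=
          lintegral_congr fun ω => hJ ω
      _ = ∑ k ∈ Finset.range n,
            ∫⁻ ω in M.cyl n (M.pathOf x v.1), ENNReal.ofReal (M.hold k ω) ∂ M.μ x :=
          lintegral_finset_sum _ (fun k _ =>
            ENNReal.measurable_ofReal.comp (M.hold_meas k))
      _ = ∑ k ∈ Finset.range n,
            ENNReal.ofReal (M.γ (M.pathOf x v.1 k))⁻¹ * M.μ x (M.cyl n (M.pathOf x v.1)) :=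
          Finset.sum_congr rfl fun k hk =>
            M.lint_hold_cyl (M.pathOf_zero x v.1) (Finset.mem_range.mp hk)
      _ = M.wt x v.1 * (∑ k ∈ Finset.range n, ENNReal.ofReal (M.γ (M.pathOf x v.1 k))⁻¹) := by
          rw [← Finset.sum_mul, M.meas_cyl_wt x v.1, mul_comm]
  rw [tsum_congr hcyl, M.ut_eq_tsum A n x]
  calc (∑' (v : {v : Fin n → M.X // ∀ k, v k ∉ A}),
        M.wt x v.1 * (∑ k ∈ Finset.range n, ENNReal.ofReal (M.γ (M.pathOf x v.1 k))⁻¹))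
      = ∑' (v : Fin n → M.X), Set.indicator {v | ∀ k, v k ∉ A}
          (fun v => M.wt x v * (∑ k ∈ Finset.range n,
            ENNReal.ofReal (M.γ (M.pathOf x v k))⁻¹)) v :=
        tsum_subtype {v : Fin n → M.X | ∀ k, v k ∉ A}
          (fun v => M.wt x v * (∑ k ∈ Finset.range n,
            ENNReal.ofReal (M.γ (M.pathOf x v k))⁻¹))
    _ = ∑' (v : Fin n → M.X), if (∀ k, v k ∉ A) then
          M.wt x v * (∑ k ∈ Finset.range n, ENNReal.ofReal (M.γ (M.pathOf x v k))⁻¹)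
        else 0 :=
        tsum_congr fun v => by rw [Set.indicator_apply]; rfl

end CTMC

open CTMC in
/-- Theorem (conditional explosion): if `f ∈ Dom_+(Γ)` satisfies `Γ f ≤ -ε`
off `A` and `f(x₀) < inf_A f` for some `x₀ ∉ A`, then for every `x ∉ A` with
`f(x) < inf_A f` the event `{τ_A = ∞}` has positive probability and the
conditional expectation `E_x(ζ | τ_A = ∞)` is finite. -/
theorem statement5 (M : CTMC) (A : Set M.X) (hA : A.Nonempty) (hAproper : A ≠ Set.univ)
    (f : M.X → ℝ) (hf : M.InDomPos f)
    (hx0 : ∃ x₀, x₀ ∉ A ∧ f x₀ < sInf (f '' A))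
    (ε : ℝ) (hε : 0 < ε)
    (hdrift : ∀ x, x ∉ A → M.gen f x ≤ -ε) :
    ∀ x, x ∉ A → f x < sInf (f '' A) →
      0 < M.μ x {ω | M.tau A ω = ⊤} ∧
      (∫⁻ ω in {ω | M.tau A ω = ⊤}, M.zeta ω ∂ M.μ x) / M.μ x {ω | M.tau A ω = ⊤} < ⊤ := by
  intro x hx hfx
  have hfx0 : 0 ≤ f x := hf.1 x
  have hbpos : 0 < sInf (f '' A) := lt_of_le_of_lt hfx0 hfx
  set b := sInf (f '' A) with hbdef
  set B := ENNReal.ofReal b with hBdef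
  have hB0 : B ≠ 0 := (ENNReal.ofReal_pos.mpr hbpos).ne'
  have hBt : B ≠ ⊤ := ENNReal.ofReal_ne_top
  have hεE0 : ENNReal.ofReal ε ≠ 0 := (ENNReal.ofReal_pos.mpr hε).ne'
  have hεEt : ENNReal.ofReal ε ≠ ⊤ := ENNReal.ofReal_ne_top
  set E := {ω : M.Ω | ∀ n, M.jump n ω ∉ A} with hEdef
  have hset : {ω | M.tau A ω = ⊤} = E := Set.ext fun ω => M.tau_top_iff A ω
  have hEmeas : MeasurableSet E := by
    have : E = ⋂ n, {ω | M.jump n ω ∈ A}ᶜ := by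
      ext ω; simp [hEdef]
    rw [this]
    exact MeasurableSet.iInter fun n => (M.meas_jump_mem n A).compl
  set S0 := {ω : M.Ω | M.jump 0 ω = x} with hS0def
  have hS0m : MeasurableSet S0 := M.jump_meas 0 x
  have hS0 : M.μ x S0 = 1 := M.start x
  have hS0c : M.μ x S0ᶜ = 0 := by
    have h := measure_compl hS0m (measure_ne_top (M.μ x) S0)
    rw [hS0, measure_univ, tsub_self] at h
    exact h
  have hES : E ∩ S0 = ⋂ n, M.evn A n x := by
    ext ω
    constructor
    · rintro ⟨hE, h0⟩
      exact mem_iInter.mpr fun n => ⟨h0, fun k _ => hE (k+1)⟩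
    · intro h
      have h' := fun n => mem_iInter.mp h n
      refine ⟨fun m => ?_, (h' 0).1⟩
      cases m with
      | zero => rw [(h' 0).1]; exact hx
      | succ k => exact (h' (k+1)).2 k (Nat.lt_succ_self k)
  have hkey := M.key_ineq A hA hf hε hdrift
  have hkill_le : ∀ n, M.hkill A n x ≤ ENNReal.ofReal (f x) / B := by
    intro n
    rw [ENNReal.le_div_iff_mul_le (Or.inl hB0) (Or.inl hBt), mul_comm]
    exact le_trans le_add_self (hkey n x hx)
  have hmlive_ge : ∀ n, 1 - ENNReal.ofReal (f x) / B ≤ M.mlive A n x := by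
    intro n
    rw [tsub_le_iff_right]
    calc (1:ℝ≥0∞) = M.mlive A n x + M.hkill A n x := (M.mlive_add_hkill A n x).symm
      _ ≤ M.mlive A n x + ENNReal.ofReal (f x) / B := add_le_add le_rfl (hkill_le n)
  have hδ : 0 < 1 - ENNReal.ofReal (f x) / B := by
    rw [tsub_pos_iff_lt]
    rw [ENNReal.div_lt_iff (Or.inl hB0) (Or.inl hBt), one_mul]
    exact (ENNReal.ofReal_lt_ofReal_iff hbpos).mpr hfx
  have hEiInf : M.μ x (E ∩ S0) = ⨅ n, M.μ x (M.evn A n x) := by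
    rw [hES]
    refine Antitone.measure_iInter (fun m n hmn => M.evn_antitone A hmn x)
      (fun n => (M.meas_evnSet A n x).nullMeasurableSet) ⟨0, measure_ne_top _ _⟩
  have hEpos : 0 < M.μ x E := by
    refine lt_of_lt_of_le hδ ?_
    refine le_trans ?_ (measure_mono (inter_subset_left (s := E) (t := S0)))
    rw [hEiInf]
    refine le_iInf fun n => ?_
    rw [M.meas_evn A n x]
    exact hmlive_ge n
  have hut_le : ∀ n, M.ut A n x ≤ ENNReal.ofReal (f x) / ENNReal.ofReal ε := by
    intro n
    rw [ENNReal.le_div_iff_mul_le (Or.inl hεE0) (Or.inl hεEt), mul_comm]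
    refine le_trans (M.eps_mul_ut_le_ll A f hε.le hf.1 n x) ?_
    exact le_trans (self_le_add_right _ _) (hkey n x hx)
  have hJmeas : ∀ n : ℕ, Measurable fun ω => ENNReal.ofReal (M.J n ω) := fun n =>
    ENNReal.measurable_ofReal.comp (Finset.measurable_sum _ (fun k _ => M.hold_meas k))
  have hJmono : Monotone fun (n : ℕ) => fun ω => ENNReal.ofReal (M.J n ω) := by
    intro m n hmn ω
    refine ENNReal.ofReal_le_ofReal ?_
    exact Finset.sum_le_sum_of_subset_of_nonneg (Finset.range_subset_range.mpr hmn)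
      (fun k _ _ => (M.hold_pos k ω).le)
  have hnum : ∫⁻ ω in {ω | M.tau A ω = ⊤}, M.zeta ω ∂ M.μ x
      ≤ ENNReal.ofReal (f x) / ENNReal.ofReal ε := by
    rw [hset]
    have hsplit : E = (E ∩ S0) ∪ (E ∩ S0ᶜ) := by
      rw [Set.inter_union_compl]
    have h1 : ∫⁻ ω in E, M.zeta ω ∂ M.μ x
        = ∫⁻ ω in E ∩ S0, M.zeta ω ∂ M.μ x + ∫⁻ ω in E ∩ S0ᶜ, M.zeta ω ∂ M.μ x := by
      conv_lhs => rw [hsplit]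
      exact lintegral_union (hEmeas.inter hS0m.compl)
        (Disjoint.mono inter_subset_right inter_subset_right disjoint_compl_right)
    have h2 : ∫⁻ ω in E ∩ S0ᶜ, M.zeta ω ∂ M.μ x = 0 :=
      setLIntegral_measure_zero _ _ (measure_mono_null inter_subset_right hS0c)
    rw [h1, h2, add_zero]
    have h3 : ∫⁻ ω in E ∩ S0, M.zeta ω ∂ M.μ x
        = ⨆ n, ∫⁻ ω in E ∩ S0, ENNReal.ofReal (M.J n ω) ∂ M.μ x :=
      lintegral_iSup hJmeas hJmono
    rw [h3]
    refine iSup_le fun n => ?_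
    calc ∫⁻ ω in E ∩ S0, ENNReal.ofReal (M.J n ω) ∂ M.μ x
        ≤ ∫⁻ ω in M.evn A n x, ENNReal.ofReal (M.J n ω) ∂ M.μ x :=
          lintegral_mono_set (by rw [hES]; exact iInter_subset _ n)
      _ = M.ut A n x := M.lint_J_evn A n x
      _ ≤ _ := hut_le n
  constructor
  · rw [hset]
    exact hEpos
  · refine ENNReal.div_lt_top ?_ ?_
    · exact (lt_of_le_of_lt hnum (ENNReal.div_lt_top ENNReal.ofReal_ne_top hεE0)).ne
    · rw [hset]
      exact hEpos.ne'
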